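/- arXiv:2102.09204 — 2 statements merged into one kernel-verified Lean document; each statement's English description precedes it below -/
import Mathlib

section
/- Let X and Y be standard Borel spaces, m a probability measure on X, κ a Markov kernel from X to Y, and γ a probability measure on X × Y whose first marginal is γ₁. Then H(γ | m ⊗ κ) = H(γ₁ | m) + H(γ | γ₁ ⊗ κ), as an identity in [0, ∞]. -/
open MeasureTheory ProbabilityTheory Real
open scoped ENNReal NNReal Classical

section Aux

variable {α β : Type*} [MeasurableSpace α] [MeasurableSpace β]

lemma aux_compProd_withDensity_left (m : Measure α) [SFinite m] (κ : Kernel α β)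
    [IsSFiniteKernel κ] {f : α → ℝ≥0∞} (hf : Measurable f) :
    (m.withDensity f) ⊗ₘ κ = (m ⊗ₘ κ).withDensity (fun p => f p.1) := by
  have hm : Measurable fun p : α × β => f p.1 := hf.comp measurable_fst
  ext s hs
  rw [Measure.compProd_apply hs, withDensity_apply _ hs,
    lintegral_withDensity_eq_lintegral_mul _ hf (Kernel.measurable_kernel_prodMk_left hs),
    ← lintegral_indicator hs _,
    Measure.lintegral_compProd (hm.indicator hs)]
  congr 1
  ext x
  simp only [Pi.mul_apply]
  rw [← lintegral_indicator_const (measurable_prodMk_left hs) (f x)]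
  refine lintegral_congr fun y => ?_
  by_cases h : (x, y) ∈ s <;> simp [Set.indicator, h]

lemma aux_integrable_min_llr_zero (p r : Measure α) [IsProbabilityMeasure p]
    [IsProbabilityMeasure r] (h : p ≪ r) : Integrable (fun x => min (llr p r x) 0) p := by
  refine ⟨((measurable_llr p r).min measurable_const).aestronglyMeasurable, ?_⟩
  rw [hasFiniteIntegral_iff_norm]
  have hF : AEMeasurable (fun x => ENNReal.ofReal ‖min (llr p r x) 0‖) r :=
    (((measurable_llr p r).min measurable_const).norm.ennreal_ofReal).aemeasurable
  rw [← lintegral_rnDeriv_mul h hF]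
  have hbound : ∀ᵐ x ∂r,
      p.rnDeriv r x * ENNReal.ofReal ‖min (llr p r x) 0‖ ≤ 1 := by
    filter_upwards [Measure.rnDeriv_lt_top p r] with x hx
    by_cases h0 : p.rnDeriv r x = 0
    · simp [h0]
    · set t : ℝ := (p.rnDeriv r x).toReal with ht_def
      have ht : 0 < t := ENNReal.toReal_pos h0 hx.ne
      have hd : p.rnDeriv r x = ENNReal.ofReal t := (ENNReal.ofReal_toReal hx.ne).symm
      rw [hd, ← ENNReal.ofReal_mul ht.le]
      refine (ENNReal.ofReal_le_ofReal ?_).trans_eq ENNReal.ofReal_one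
      have hllr : llr p r x = log t := rfl
      rw [hllr]
      rcases le_or_gt 0 (log t) with hl | hl
      · rw [min_eq_right hl, norm_zero, mul_zero]; exact zero_le_one
      · rw [min_eq_left hl.le, norm_of_nonpos hl.le]
        have : -log t ≤ t⁻¹ - 1 := by
          rw [← log_inv]
          exact log_le_sub_one_of_pos (inv_pos.mpr ht)
        calc t * -log t ≤ t * (t⁻¹ - 1) := by nlinarith
          _ = 1 - t := by field_simp
          _ ≤ 1 := by linarith
  calc ∫⁻ x, p.rnDeriv r x * ENNReal.ofReal ‖min (llr p r x) 0‖ ∂r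
      ≤ ∫⁻ _, 1 ∂r := lintegral_mono_ae hbound
    _ = 1 := by simp
    _ < ⊤ := ENNReal.one_lt_top

lemma aux_integrable_of_add {μ : Measure α} {a b : α → ℝ}
    (ha : AEStronglyMeasurable a μ)
    (hab : Integrable (fun x => a x + b x) μ)
    (hna : Integrable (fun x => min (a x) 0) μ)
    (hnb : Integrable (fun x => min (b x) 0) μ) : Integrable a μ := by
  refine Integrable.mono'
    (g := fun x => |a x + b x| + -(min (b x) 0) + -(min (a x) 0)) ((hab.abs.add hnb.neg).add hna.neg)
    ha (ae_of_all _ fun x => ?_)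
  have h1 : min (b x) 0 ≤ b x := min_le_left _ _
  have h2 : min (b x) 0 ≤ 0 := min_le_right _ _
  have h3 : min (a x) 0 ≤ a x := min_le_left _ _
  have h4 : min (a x) 0 ≤ 0 := min_le_right _ _
  have h5 : a x + b x ≤ |a x + b x| := le_abs_self _
  have h6 : -(a x + b x) ≤ |a x + b x| := neg_le_abs _
  rw [Real.norm_eq_abs, abs_le]
  constructor <;> nlinarith

lemma aux_fst_absCont {m : Measure α} [SFinite m] {κ : Kernel α β} [IsMarkovKernel κ]
    {γ : Measure (α × β)} [SFinite γ] (hfull : γ ≪ m ⊗ₘ κ) : γ.fst ≪ m := by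
  have h := hfull.map (f := Prod.fst) measurable_fst
  rwa [show (m ⊗ₘ κ).map Prod.fst = (m ⊗ₘ κ).fst from rfl, Measure.fst_compProd] at h

lemma aux_absCont_compProd_fst {m : Measure α} [IsProbabilityMeasure m] {κ : Kernel α β}
    [IsMarkovKernel κ] {γ : Measure (α × β)} [IsProbabilityMeasure γ]
    (hac1 : γ.fst ≪ m) (hfull : γ ≪ m ⊗ₘ κ) : γ ≪ γ.fst ⊗ₘ κ := by
  set g := γ.fst.rnDeriv m with hg_def
  have hg : Measurable g := Measure.measurable_rnDeriv _ _
  have hgm : Measurable fun p : α × β => g p.1 := hg.comp measurable_fst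
  have hZ0 : MeasurableSet {x : α | g x = 0} := hg (measurableSet_singleton 0)
  have hZ : MeasurableSet {p : α × β | g p.1 = 0} := hgm (measurableSet_singleton 0)
  have hrepr : γ.fst ⊗ₘ κ = (m ⊗ₘ κ).withDensity (fun p => g p.1) := by
    rw [← aux_compProd_withDensity_left m κ hg, Measure.withDensity_rnDeriv_eq _ _ hac1]
  refine Measure.AbsolutelyContinuous.mk fun s hs hs0 => ?_
  rw [hrepr, withDensity_apply _ hs] at hs0
  have hZne : MeasurableSet {p : α × β | ¬ g p.1 = 0} := hZ.compl
  have h1 : (m ⊗ₘ κ) ({p : α × β | ¬ g p.1 = 0} ∩ s) = 0 := by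
    have hae : (fun p : α × β => g p.1) =ᵐ[(m ⊗ₘ κ).restrict s] 0 :=
      (lintegral_eq_zero_iff hgm).mp hs0
    have h0 : ((m ⊗ₘ κ).restrict s) {p : α × β | ¬ g p.1 = 0} = 0 := by
      simpa using ae_iff.mp hae
    rwa [Measure.restrict_apply hZne] at h0
  have h2 : γ {p : α × β | g p.1 = 0} = 0 := by
    have hfst : γ.fst {x | g x = 0} = 0 := by
      have heq : γ.fst {x | g x = 0} = ∫⁻ x in {x | g x = 0}, g x ∂m := by
        conv_lhs => rw [← Measure.withDensity_rnDeriv_eq _ _ hac1]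
        rw [withDensity_apply _ hZ0]
      rw [heq, setLIntegral_congr_fun hZ0 (fun x hx => hx)]
      simp
    rwa [Measure.fst_apply hZ0] at hfst
  have hle : γ s ≤ γ ({p : α × β | ¬ g p.1 = 0} ∩ s) + γ {p : α × β | g p.1 = 0} := by
    refine (measure_mono ?_).trans (measure_union_le _ _)
    intro p hp
    by_cases h : g p.1 = 0
    · exact Or.inr h
    · exact Or.inl ⟨h, hp⟩
  rw [hfull h1, h2, add_zero] at hle
  exact le_antisymm hle (zero_le')

lemma aux_llr_sum {m : Measure α} [IsProbabilityMeasure m] {κ : Kernel α β}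
    [IsMarkovKernel κ] {γ : Measure (α × β)} [IsProbabilityMeasure γ]
    (hac1 : γ.fst ≪ m) (hac2 : γ ≪ γ.fst ⊗ₘ κ) :
    llr γ (m ⊗ₘ κ) =ᵐ[γ] fun p => llr γ.fst m p.1 + llr γ (γ.fst ⊗ₘ κ) p := by
  set g := γ.fst.rnDeriv m with hg_def
  set h := γ.rnDeriv (γ.fst ⊗ₘ κ) with hh_def
  have hg : Measurable g := Measure.measurable_rnDeriv _ _
  have hh : Measurable h := Measure.measurable_rnDeriv _ _
  have hgm : Measurable fun p : α × β => g p.1 := hg.comp measurable_fst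
  have hrepr : γ.fst ⊗ₘ κ = (m ⊗ₘ κ).withDensity (fun p => g p.1) := by
    rw [← aux_compProd_withDensity_left m κ hg, Measure.withDensity_rnDeriv_eq _ _ hac1]
  have hγrepr : γ = (m ⊗ₘ κ).withDensity ((fun p : α × β => g p.1) * h) := by
    rw [withDensity_mul _ hgm hh, ← hrepr, Measure.withDensity_rnDeriv_eq _ _ hac2]
  have hfull : γ ≪ m ⊗ₘ κ := by
    rw [hγrepr]; exact withDensity_absolutelyContinuous _ _
  have hrn : γ.rnDeriv (m ⊗ₘ κ) =ᵐ[m ⊗ₘ κ] (fun p : α × β => g p.1) * h := by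
    nth_rewrite 1 [hγrepr]
    exact Measure.rnDeriv_withDensity _ (hgm.mul hh)
  have h1 : ∀ᵐ p ∂γ, γ.rnDeriv (m ⊗ₘ κ) p = g p.1 * h p := hfull.ae_le hrn
  have h2 : ∀ᵐ p ∂γ, 0 < h p := Measure.rnDeriv_pos hac2
  have h3 : ∀ᵐ p ∂γ, h p < ⊤ := hac2.ae_le (Measure.rnDeriv_lt_top _ _)
  have h4 : ∀ᵐ x ∂γ.fst, ¬ g x = 0 ∧ ¬ g x = ⊤ := by
    filter_upwards [Measure.rnDeriv_pos hac1, hac1.ae_le (Measure.rnDeriv_lt_top γ.fst m)]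
      with x hx hx'
    exact ⟨hx.ne', hx'.ne⟩
  have h4' : ∀ᵐ p ∂γ, ¬ g p.1 = 0 ∧ ¬ g p.1 = ⊤ := by
    have hmeas : MeasurableSet {x : α | ¬ g x = 0 ∧ ¬ g x = ⊤} :=
      (hg (measurableSet_singleton 0)).compl.inter (hg (measurableSet_singleton ⊤)).compl
    rw [Measure.fst, ae_map_iff measurable_fst.aemeasurable hmeas] at h4
    exact h4
  filter_upwards [h1, h2, h3, h4'] with p hp hhp hhtop hgp
  rw [llr, llr, llr, hp, ENNReal.toReal_mul, Real.log_mul]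
  · exact (ENNReal.toReal_pos hgp.1 hgp.2).ne'
  · exact (ENNReal.toReal_pos hhp.ne' hhtop.ne).ne'

end Aux

/-- Relative entropy `H(p|r) = ∫ log (dp/dr) dp ∈ [0,∞]` when `p ≪ r` (with value `+∞` when the
integrand is not integrable), and `H(p|r) = +∞` otherwise. -/
noncomputable def relEntropy {Y : Type*} [MeasurableSpace Y] (p r : Measure Y) : EReal :=
  if p ≪ r ∧ Integrable (llr p r) p then ((∫ x, llr p r x ∂p : ℝ) : EReal) else ⊤

lemma relEntropy_ne_bot {Y : Type*} [MeasurableSpace Y] (p r : Measure Y) :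
    relEntropy p r ≠ ⊥ := by
  rw [relEntropy]
  split_ifs
  · exact EReal.coe_ne_bot _
  · exact (bot_lt_top).ne'

/-- Chain rule for relative entropy: for a probability measure `m` on `X`, a Markov kernel `κ`
from `X` to `Y`, and a probability measure `γ` on `X × Y` with first marginal `γ₁`, one has
`H(γ | m ⊗ κ) = H(γ₁ | m) + H(γ | γ₁ ⊗ κ)` in `[0,∞]`. -/
theorem relEntropy_compProd_chain_rule {X Y : Type*}
    [MeasurableSpace X] [StandardBorelSpace X] [MeasurableSpace Y] [StandardBorelSpace Y]
    (m : Measure X) [IsProbabilityMeasure m] (κ : Kernel X Y) [IsMarkovKernel κ]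
    (γ : Measure (X × Y)) [IsProbabilityMeasure γ] :
    relEntropy γ (m ⊗ₘ κ) = relEntropy γ.fst m + relEntropy γ (γ.fst ⊗ₘ κ) := by
  by_cases hfull : γ ≪ m ⊗ₘ κ
  · have hac1 : γ.fst ≪ m := aux_fst_absCont hfull
    have hac2 : γ ≪ γ.fst ⊗ₘ κ := aux_absCont_compProd_fst hac1 hfull
    have hsum := aux_llr_sum hac1 hac2
    set a : X × Y → ℝ := fun p => llr γ.fst m p.1 with ha_def
    set b := llr γ (γ.fst ⊗ₘ κ) with hb_def
    have hmeasa : Measurable a := (measurable_llr _ _).comp measurable_fst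
    have hfst : γ.fst = γ.map Prod.fst := rfl
    have hna : Integrable (fun p => min (a p) 0) γ := by
      have h := aux_integrable_min_llr_zero γ.fst m hac1
      rw [hfst, integrable_map_measure
        ((measurable_llr _ _).min measurable_const).aestronglyMeasurable
        measurable_fst.aemeasurable] at h
      exact h
    have hnb : Integrable (fun p => min (b p) 0) γ := aux_integrable_min_llr_zero γ _ hac2
    have haint : Integrable a γ ↔ Integrable (llr γ.fst m) γ.fst :=
      (integrable_map_measure (measurable_llr γ.fst m).aestronglyMeasurable
        measurable_fst.aemeasurable (μ := γ)).symm
    have haval : ∫ x, llr γ.fst m x ∂γ.fst = ∫ p, a p ∂γ :=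
      integral_map (μ := γ) measurable_fst.aemeasurable
        (measurable_llr γ.fst m).aestronglyMeasurable
    by_cases hint : Integrable (llr γ (m ⊗ₘ κ)) γ
    · have hab : Integrable (fun p => a p + b p) γ := (integrable_congr hsum).mp hint
      have hA : Integrable a γ := aux_integrable_of_add hmeasa.aestronglyMeasurable hab hna hnb
      have hB : Integrable b γ := by
        have h := hab.sub hA
        refine h.congr (ae_of_all _ fun x => ?_)
        simp
      rw [relEntropy, relEntropy, relEntropy, if_pos ⟨hfull, hint⟩,
        if_pos ⟨hac1, haint.mp hA⟩, if_pos ⟨hac2, hB⟩, ← EReal.coe_add]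
      norm_cast
      rw [integral_congr_ae hsum, integral_add hA hB, haval]
    · rw [relEntropy, if_neg (fun hc => hint hc.2)]
      by_cases hA : Integrable (llr γ.fst m) γ.fst
      · have hB : ¬ Integrable b γ := by
          intro hB
          exact hint ((integrable_congr hsum).mpr ((haint.mpr hA).add hB))
        have hR2 : relEntropy γ (γ.fst ⊗ₘ κ) = ⊤ := by
          rw [relEntropy, if_neg (fun hc => hB hc.2)]
        rw [hR2, EReal.add_top_of_ne_bot (relEntropy_ne_bot _ _)]
      · have hR1 : relEntropy γ.fst m = ⊤ := by
          rw [relEntropy, if_neg (fun hc => hA hc.2)]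
        rw [hR1, EReal.top_add_of_ne_bot (relEntropy_ne_bot _ _)]
  · rw [relEntropy, if_neg (fun hc => hfull hc.1)]
    by_cases h1 : γ.fst ≪ m
    · have h2 : ¬ γ ≪ γ.fst ⊗ₘ κ := fun h2 =>
        hfull (h2.trans (h1.compProd_left κ))
      have hR2 : relEntropy γ (γ.fst ⊗ₘ κ) = ⊤ := by
        rw [relEntropy, if_neg (fun hc => h2 hc.1)]
      rw [hR2, EReal.add_top_of_ne_bot (relEntropy_ne_bot _ _)]
    · have hR1 : relEntropy γ.fst m = ⊤ := by
        rw [relEntropy, if_neg (fun hc => h1 hc.1)]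
      rw [hR1, EReal.top_add_of_ne_bot (relEntropy_ne_bot _ _)]
end

section
/- Let n ≥ 1, α ∈ (0,∞)ⁿ, and v ∈ ℝⁿ. If vᵢ < 1 for every i, then sup{⟨v,β⟩ − KL(α|β) : β ∈ [0,∞)ⁿ} = −Σᵢ αᵢ·log(1 − vᵢ), and the supremum is attained at the vector β with βᵢ = αᵢ/(1 − vᵢ). If vᵢ ≥ 1 for some i, the supremum is +∞. -/
open scoped ENNReal NNReal Classical BigOperators

/-- The generalized Kullback–Leibler term `a·log(a/b) − a + b` for `a, b ≥ 0`, with the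
conventions `0·log(0/b) = 0` for `b ≥ 0` and `a·log(a/0) = +∞` for `a > 0`. -/
noncomputable def klTerm (a b : ℝ≥0) : EReal :=
  if a = 0 then ((b : ℝ) : EReal)
  else if b = 0 then ⊤
  else (((a : ℝ) * Real.log ((a : ℝ) / (b : ℝ)) - (a : ℝ) + (b : ℝ) : ℝ) : EReal)

private lemma key_real (a b v : ℝ) (ha : 0 < a) (hb : 0 < b) (hv : v < 1) :
    v*b - (a*Real.log (a/b) - a + b) ≤ -(a * Real.log (1-v)) := by
  have h1v : (0:ℝ) < 1 - v := by linarith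
  have hbs : 0 < a / (1-v) := div_pos ha h1v
  have h1 : Real.log (b / (a/(1-v))) ≤ b/(a/(1-v)) - 1 :=
    Real.log_le_sub_one_of_pos (by positivity)
  rw [Real.log_div hb.ne' hbs.ne', Real.log_div ha.ne' h1v.ne'] at h1
  rw [Real.log_div ha.ne' hb.ne']
  have h2 : b/(a/(1-v)) = b*(1-v)/a := by field_simp
  rw [h2] at h1
  have h3 : a * (Real.log b - (Real.log a - Real.log (1-v))) ≤ a * (b*(1-v)/a - 1) :=
    mul_le_mul_of_nonneg_left h1 ha.le
  have h4 : a * (b*(1-v)/a) = b*(1-v) := by field_simp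
  nlinarith [h3]

private lemma key_eq (a v : ℝ) (ha : 0 < a) (hv : v < 1) :
    v*(a/(1-v)) - (a*Real.log (a/(a/(1-v))) - a + a/(1-v)) = -(a * Real.log (1-v)) := by
  have h1 : (0:ℝ) < 1 - v := by linarith
  have h2 : a/(a/(1-v)) = 1-v := by field_simp
  rw [h2]
  field_simp
  ring

private lemma klReal_nonneg (a b : ℝ) (ha : 0 < a) (hb : 0 < b) :
    0 ≤ a*Real.log (a/b) - a + b := by
  have h1 : Real.log (b/a) ≤ b/a - 1 := Real.log_le_sub_one_of_pos (by positivity)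
  rw [Real.log_div hb.ne' ha.ne'] at h1
  rw [Real.log_div ha.ne' hb.ne']
  have h3 := mul_le_mul_of_nonneg_left h1 ha.le
  have h4 : a * (b/a) = b := by field_simp
  nlinarith

private lemma klTerm_nonneg (a b : ℝ≥0) : (0 : EReal) ≤ klTerm a b := by
  unfold klTerm
  split_ifs with h1 h2
  · exact_mod_cast b.coe_nonneg
  · exact le_top
  · have ha : (0:ℝ) < a := by positivity
    have hb : (0:ℝ) < b := by positivity
    exact_mod_cast klReal_nonneg a b ha hb

private lemma klTerm_coe (a b : ℝ≥0) (ha : a ≠ 0) (hb : b ≠ 0) :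
    klTerm a b = (((a : ℝ) * Real.log ((a : ℝ) / (b : ℝ)) - (a : ℝ) + (b : ℝ) : ℝ) : EReal) := by
  unfold klTerm; rw [if_neg ha, if_neg hb]

private lemma coe_sum {ι : Type*} (s : Finset ι) (f : ι → ℝ) :
    ((∑ i ∈ s, f i : ℝ) : EReal) = ∑ i ∈ s, ((f i : ℝ) : EReal) :=
  map_sum (⟨⟨Real.toEReal, EReal.coe_zero⟩, EReal.coe_add⟩ : ℝ →+ EReal) f s

/-- For `α ∈ (0,∞)ⁿ` and `v ∈ ℝⁿ`: if `vᵢ < 1` for every `i`, then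
`sup {⟨v,β⟩ − KL(α|β) : β ∈ [0,∞)ⁿ} = −Σᵢ αᵢ·log(1 − vᵢ)`, attained at `βᵢ = αᵢ/(1 − vᵢ)`;
if `vᵢ ≥ 1` for some `i`, the supremum is `+∞`. -/
theorem klDiv_conjugate_second (n : ℕ) (hn : 1 ≤ n) (α : Fin n → ℝ≥0) (hα : ∀ i, 0 < α i)
    (v : Fin n → ℝ) :
    ((∀ i, v i < 1) →
      ((⨆ β : Fin n → ℝ≥0,
          (((∑ i, v i * (β i : ℝ) : ℝ) : EReal) - ∑ i, klTerm (α i) (β i)))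
        = ((-∑ i, (α i : ℝ) * Real.log (1 - v i) : ℝ) : EReal))
      ∧ ((((∑ i, v i * ((α i / (1 - v i).toNNReal : ℝ≥0) : ℝ) : ℝ) : EReal)
            - ∑ i, klTerm (α i) (α i / (1 - v i).toNNReal))
          = ((-∑ i, (α i : ℝ) * Real.log (1 - v i) : ℝ) : EReal)))
    ∧ ((∃ i, 1 ≤ v i) →
        (⨆ β : Fin n → ℝ≥0,
          (((∑ i, v i * (β i : ℝ) : ℝ) : EReal) - ∑ i, klTerm (α i) (β i))) = ⊤) := by
  constructor
  · intro hv
    -- the candidate maximizer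
    set βs : Fin n → ℝ≥0 := fun i => α i / (1 - v i).toNNReal with hβs
    have hβs_coe : ∀ i, ((βs i : ℝ)) = (α i : ℝ) / (1 - v i) := by
      intro i
      have h1 : (0:ℝ) ≤ 1 - v i := by linarith [hv i]
      simp only [hβs, NNReal.coe_div, Real.coe_toNNReal _ h1]
    have hβs_pos : ∀ i, βs i ≠ 0 := by
      intro i
      have h1 : (0:ℝ) < 1 - v i := by linarith [hv i]
      have : (0:ℝ) < (βs i : ℝ) := by
        rw [hβs_coe i]; exact div_pos (by exact_mod_cast hα i) h1
      exact_mod_cast this.ne'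
    -- attainment equality
    have hatt : ((((∑ i, v i * ((βs i : ℝ)) : ℝ)) : EReal)
          - ∑ i, klTerm (α i) (βs i))
        = ((-∑ i, (α i : ℝ) * Real.log (1 - v i) : ℝ) : EReal) := by
      have hsum : (∑ i, klTerm (α i) (βs i))
          = ((∑ i, ((α i : ℝ) * Real.log ((α i : ℝ) / (βs i : ℝ)) - (α i : ℝ) + (βs i : ℝ)) : ℝ) : EReal) := by
        rw [coe_sum]
        exact Finset.sum_congr rfl fun i _ => (klTerm_coe _ _ (hα i).ne' (hβs_pos i)).symm ▸ rfl
      rw [hsum, ← EReal.coe_sub, EReal.coe_eq_coe_iff, ← Finset.sum_sub_distrib,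
        (Finset.sum_neg_distrib _).symm]
      exact Finset.sum_congr rfl fun i _ => by
        rw [hβs_coe i]
        exact key_eq (α i) (v i) (by exact_mod_cast hα i) (hv i)
    constructor
    · apply le_antisymm
      · apply iSup_le
        intro β
        by_cases hz : ∀ i, β i ≠ 0
        · have hsum : (∑ i, klTerm (α i) (β i))
              = ((∑ i, ((α i : ℝ) * Real.log ((α i : ℝ) / (β i : ℝ)) - (α i : ℝ) + (β i : ℝ)) : ℝ) : EReal) := by
            rw [coe_sum]
            exact Finset.sum_congr rfl fun i _ => klTerm_coe _ _ (hα i).ne' (hz i)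
          rw [hsum, ← EReal.coe_sub, EReal.coe_le_coe_iff, ← Finset.sum_sub_distrib,
            (Finset.sum_neg_distrib _).symm]
          apply Finset.sum_le_sum
          intro i _
          have hbi : (0:ℝ) < β i := by
            have := hz i; positivity
          exact key_real (α i) (β i) (v i) (by exact_mod_cast hα i) hbi (hv i)
        · push_neg at hz
          obtain ⟨i, hi⟩ := hz
          have htop : (∑ j, klTerm (α j) (β j)) = ⊤ := by
            rw [← Finset.add_sum_erase _ _ (Finset.mem_univ i)]
            have h1 : klTerm (α i) (β i) = ⊤ := by
              unfold klTerm; rw [if_neg (hα i).ne', hi, if_pos rfl]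
            rw [h1]
            apply EReal.top_add_of_ne_bot
            intro hbot
            have h2 : (0:EReal) ≤ ∑ j ∈ Finset.univ.erase i, klTerm (α j) (β j) :=
              Finset.sum_nonneg fun j _ => klTerm_nonneg _ _
            rw [hbot] at h2
            exact absurd h2 (by simp)
          rw [htop]
          simp
      · rw [← hatt]
        exact le_iSup (fun β : Fin n → ℝ≥0 =>
          (((∑ i, v i * (β i : ℝ) : ℝ) : EReal) - ∑ i, klTerm (α i) (β i))) βs
    · exact hatt
  · intro ⟨i, hi⟩
    rw [iSup_eq_top]
    intro x hx
    have hai : (0:ℝ) < α i := by exact_mod_cast hα i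
    obtain ⟨z, hxz, hz⟩ := exists_between hx
    obtain ⟨M, rfl⟩ : ∃ M : ℝ, z = (M : ℝ) := by
      cases z with
      | bot => exact absurd hxz (by simp)
      | top => exact absurd hz (lt_irrefl _)
      | coe M => exact ⟨M, rfl⟩
    set A : ℝ := (∑ j ∈ Finset.univ.erase i, v j * (α j : ℝ)) + (α i : ℝ)
      - (α i : ℝ) * Real.log (α i : ℝ) with hA
    set s : ℝ := (M - A) / (α i : ℝ) + 1 with hs
    set t : ℝ≥0 := (Real.exp s).toNNReal with ht
    have htc : (t : ℝ) = Real.exp s := Real.coe_toNNReal _ (Real.exp_pos s).le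
    have htpos : (0:ℝ) < (t : ℝ) := by rw [htc]; exact Real.exp_pos s
    have htne : t ≠ 0 := by exact_mod_cast htpos.ne'
    set β : Fin n → ℝ≥0 := Function.update α i t with hβ
    have hβi : β i = t := Function.update_self i t α
    have hβj : ∀ j, j ≠ i → β j = α j := fun j hj => Function.update_of_ne hj t α
    have hβne : ∀ j, β j ≠ 0 := by
      intro j
      by_cases hj : j = i
      · rw [hj, hβi]; exact htne
      · rw [hβj j hj]; exact (hα j).ne'
    refine ⟨β, lt_trans hxz ?_⟩
    -- everything is real
    have hsum : (∑ j, klTerm (α j) (β j))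
        = ((∑ j, ((α j : ℝ) * Real.log ((α j : ℝ) / (β j : ℝ)) - (α j : ℝ) + (β j : ℝ)) : ℝ) : EReal) := by
      rw [coe_sum]
      exact Finset.sum_congr rfl fun j _ => klTerm_coe _ _ (hα j).ne' (hβne j)
    rw [hsum, ← EReal.coe_sub, EReal.coe_lt_coe_iff]
    -- compute the KL sum
    have hK : (∑ j, ((α j : ℝ) * Real.log ((α j : ℝ) / (β j : ℝ)) - (α j : ℝ) + (β j : ℝ)))
        = (α i : ℝ) * Real.log ((α i : ℝ) / (t : ℝ)) - (α i : ℝ) + (t : ℝ) := by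
      rw [Finset.sum_eq_single_of_mem i (Finset.mem_univ i)]
      · rw [hβi]
      · intro j _ hj
        rw [hβj j hj]
        have : (α j : ℝ) / (α j : ℝ) = 1 := div_self (by exact_mod_cast (hα j).ne')
        rw [this, Real.log_one]
        ring
    have hSv : (∑ j, v j * (β j : ℝ))
        = v i * (t : ℝ) + ∑ j ∈ Finset.univ.erase i, v j * (α j : ℝ) := by
      rw [← Finset.add_sum_erase _ _ (Finset.mem_univ i), hβi]
      congr 1
      exact Finset.sum_congr rfl fun j hj => by
        rw [hβj j (Finset.ne_of_mem_erase hj)]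
    rw [hK, hSv]
    have hlogdiv : Real.log ((α i : ℝ) / (t : ℝ)) = Real.log (α i : ℝ) - s := by
      rw [Real.log_div hai.ne' htpos.ne', htc, Real.log_exp]
    rw [hlogdiv]
    have hvit : (v i - 1) * (t : ℝ) ≥ 0 := mul_nonneg (by linarith) htpos.le
    have hαs : (α i : ℝ) * s = M - A + (α i : ℝ) := by
      rw [hs]; field_simp
    nlinarith [hvit, hαs, hai]
end
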